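/- Let G be an additive abelian group, let q ≥ 2, N ≥ 1, t ≥ 1 be integers, and let g_0,…,g_{q−1} ∈ G be a t-Sidon family. Then for every g ∈ G, the set C_g := {x ∈ S_{q,N} : ∑_{i=0}^{q−1} x_i · g_i = g} satisfies d₁(x,y) ≥ t+1 for all distinct x, y ∈ C_g. -/
import Mathlib


/-- The discrete simplex `S_{q,N}`: tuples of naturals of length `q` summing to `N`. -/
def simplex (q N : ℕ) : Finset (Fin q → ℕ) := Finset.Nat.antidiagonalTuple q N

/-- The ℓ₁ distance `d₁(x,y) = (1/2) ∑ i, |x i − y i|` on the discrete simplex (the sum of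
absolute differences is even for tuples with equal sums, so division by 2 is exact). -/
def d1 {q : ℕ} (x y : Fin q → ℕ) : ℕ := (∑ i, ((x i : ℤ) - (y i : ℤ)).natAbs) / 2

/-- A family `g : Fin q → G` in an additive abelian group is a `t`-Sidon family if all
`t`-fold sums (with repetition) of its members are distinct: whenever two multiplicity
tuples `e, f` of total weight `t` give equal sums `∑ i, e i • g i = ∑ i, f i • g i`,
we have `e = f`. -/
def IsSidonFamily {G : Type*} [AddCommGroup G] {q : ℕ} (t : ℕ) (g : Fin q → G) : Prop :=
  ∀ e f : Fin q → ℕ, ∑ i, e i = t → ∑ i, f i = t →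
    ∑ i, e i • g i = ∑ i, f i • g i → e = f

/-- if `g_0, …, g_{q−1}` is a `t`-Sidon family in an additive abelian group
`G`, then for every `g ∈ G` the set `C_g = {x ∈ S_{q,N} : ∑ i, x i • g i = g}` has pairwise
ℓ₁ distances at least `t + 1`. -/
theorem sidon_gives_l1_distance {G : Type*} [AddCommGroup G] (q N t : ℕ)
    (hq : 2 ≤ q) (hN : 1 ≤ N) (ht : 1 ≤ t)
    (g : Fin q → G) (hSidon : IsSidonFamily t g) (gv : G)
    (x y : Fin q → ℕ) (hx : ∑ i, x i = N) (hy : ∑ i, y i = N)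
    (hxg : ∑ i, x i • g i = gv) (hyg : ∑ i, y i • g i = gv) (hxy : x ≠ y) :
    t + 1 ≤ d1 x y := by
  haveI : NeZero q := ⟨by omega⟩
  set p : Fin q → ℕ := fun i => x i - y i with hp
  set m : Fin q → ℕ := fun i => y i - x i with hm
  -- sums of p and m are equal
  have hpm : ∀ i, p i + y i = m i + x i := fun i => by simp only [hp, hm]; omega
  have hsum : ∑ i, p i = ∑ i, m i := by
    have h0 : ∑ i, (p i + y i) = ∑ i, (m i + x i) :=
      Finset.sum_congr rfl (fun i _ => hpm i)
    rw [Finset.sum_add_distrib, Finset.sum_add_distrib, hx, hy] at h0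
    omega
  -- d1 x y = ∑ p
  have hd1 : d1 x y = ∑ i, p i := by
    unfold d1
    have : ∀ i, ((x i : ℤ) - (y i : ℤ)).natAbs = p i + m i := fun i => by
      simp only [hp, hm]; omega
    have h0 : ∑ i, ((x i : ℤ) - (y i : ℤ)).natAbs = ∑ i, (p i + m i) :=
      Finset.sum_congr rfl (fun i _ => this i)
    rw [h0, Finset.sum_add_distrib, ← hsum]
    omega
  -- sum equality in G
  have hg : ∑ i, p i • g i = ∑ i, m i • g i := by
    have h1 : ∑ i, (p i + y i) • g i = ∑ i, (m i + x i) • g i :=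
      Finset.sum_congr rfl (fun i _ => by rw [hpm i])
    simp only [add_smul, Finset.sum_add_distrib, hxg, hyg] at h1
    exact add_right_cancel h1
  by_contra hlt
  push_neg at hlt
  have hdt : ∑ i, p i ≤ t := by omega
  set c := t - ∑ i, p i with hc
  set e : Fin q → ℕ := fun i => p i + if i = 0 then c else 0 with he
  set f : Fin q → ℕ := fun i => m i + if i = 0 then c else 0 with hf
  have hind : ∑ i : Fin q, (if i = 0 then c else 0) = c := by
    rw [Finset.sum_ite_eq' Finset.univ (0 : Fin q) (fun _ => c)]
    simp
  have hes : ∑ i, e i = t := by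
    simp only [he, Finset.sum_add_distrib, hind]; omega
  have hfs : ∑ i, f i = t := by
    simp only [hf, Finset.sum_add_distrib, hind, ← hsum]; omega
  have heg : ∑ i, e i • g i = ∑ i, f i • g i := by
    simp only [he, hf, add_smul, Finset.sum_add_distrib, hg]
  have hef := hSidon e f hes hfs heg
  apply hxy
  funext i
  have : e i = f i := by rw [hef]
  simp only [he, hf, hp, hm] at this
  omega
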